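/- Let P̃(2) be the right prism of height 2 over an equilateral triangle with side length 2 (vertices A=(0,0,h), B=(2,0,h), C=(1,√3,h) for h ∈ {0,2}). Then the vertex set of P̃(2) is homogeneous but not 2-point homogeneous: d((0,0,0),(2,0,0)) = d((0,0,0),(0,0,2)) = 2, yet no isometry of the vertex set maps the pair ((0,0,0),(2,0,0)) to the pair ((0,0,0),(0,0,2)). -/

import Mathlib

/-- A point of `ℝ³` with the Euclidean (`L²`) metric, given by three coordinates. -/
noncomputable def pt (x y z : ℝ) : EuclideanSpace ℝ (Fin 3) :=
  (WithLp.equiv 2 (Fin 3 → ℝ)).symm ![x, y, z]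

/-- The 6 vertices of the right prism of height 2 over an equilateral triangle with
side length 2. -/
noncomputable def triPrismVerts : Set (EuclideanSpace ℝ (Fin 3)) :=
  {pt 0 0 0, pt 2 0 0, pt 1 (Real.sqrt 3) 0, pt 0 0 2, pt 2 0 2, pt 1 (Real.sqrt 3) 2}

noncomputable def v : Fin 6 → EuclideanSpace ℝ (Fin 3) :=
  ![pt 0 0 0, pt 2 0 0, pt 1 (Real.sqrt 3) 0, pt 0 0 2, pt 2 0 2, pt 1 (Real.sqrt 3) 2]

def n2 (i j : Fin 6) : ℕ :=
  if i = j then 0 else if i.val % 3 = j.val % 3 ∨ i.val / 3 = j.val / 3 then 4 else 8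

theorem dist_v (i j : Fin 6) : dist (v i) (v j) = Real.sqrt (n2 i j) := by
  fin_cases i <;> fin_cases j <;>
    · rw [EuclideanSpace.dist_eq]
      simp only [v, pt, n2, Fin.sum_univ_three, Real.dist_eq, WithLp.equiv_symm_apply, PiLp.toLp_apply,
        Matrix.cons_val_zero, Matrix.cons_val_one, Matrix.head_cons, Matrix.cons_val_two,
        Matrix.tail_cons, Matrix.cons_val_three, Matrix.cons_val_four, Fin.mk_zero', Fin.mk_one, Fin.reduceFinMk, WithLp.ofLp_toLp, Matrix.cons_val]
      norm_num [sq_abs, sub_sq, Real.sq_sqrt, Fin.ext_iff]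

theorem n2_eq_of_dist {i j k l : Fin 6} (h : dist (v i) (v j) = dist (v k) (v l)) :
    n2 i j = n2 k l := by
  rw [dist_v, dist_v] at h
  exact_mod_cast (Real.sqrt_inj (by positivity) (by positivity)).mp h

theorem v_inj : Function.Injective v := by
  intro i j h
  have : n2 i j = n2 i i := n2_eq_of_dist (by rw [h])
  revert this
  fin_cases i <;> fin_cases j <;> decide

theorem v_mem (i : Fin 6) : v i ∈ triPrismVerts := by
  fin_cases i
  exacts [Or.inl rfl, Or.inr (Or.inl rfl), Or.inr (Or.inr (Or.inl rfl)),
    Or.inr (Or.inr (Or.inr (Or.inl rfl))),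
    Or.inr (Or.inr (Or.inr (Or.inr (Or.inl rfl)))),
    Or.inr (Or.inr (Or.inr (Or.inr (Or.inr rfl))))]

theorem v_surj (p : ↥triPrismVerts) : ∃ i : Fin 6, v i = p.val := by
  rcases p.2 with h | h | h | h | h | h
  exacts [⟨0, h.symm⟩, ⟨1, h.symm⟩, ⟨2, h.symm⟩, ⟨3, h.symm⟩, ⟨4, h.symm⟩, ⟨5, h.symm⟩]

noncomputable def E : Fin 6 ≃ ↥triPrismVerts :=
  Equiv.ofBijective (fun i => ⟨v i, v_mem i⟩)
    ⟨fun a b h => v_inj (congrArg Subtype.val h),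
     fun p => (v_surj p).imp fun i h => Subtype.ext h⟩

theorem E_apply (i : Fin 6) : (E i : EuclideanSpace ℝ (Fin 3)) = v i := rfl

noncomputable def mkIso (σ : Equiv.Perm (Fin 6)) (h : ∀ i j, n2 (σ i) (σ j) = n2 i j) :
    ↥triPrismVerts ≃ᵢ ↥triPrismVerts where
  toEquiv := (E.symm.trans σ).trans E
  isometry_toFun := Isometry.of_dist_eq fun x y => by
    show dist (E (σ (E.symm x))) (E (σ (E.symm y))) = dist x y
    rw [Subtype.dist_eq, Subtype.dist_eq, E_apply, E_apply, dist_v, h,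
      ← dist_v, ← E_apply (E.symm x), ← E_apply (E.symm y), E.apply_symm_apply,
      E.apply_symm_apply, ← Subtype.dist_eq]

def rp : Equiv.Perm (Fin 6) :=
  ⟨fun i => ![1,2,0,4,5,3] i, fun i => ![2,0,1,5,3,4] i, by decide, by decide⟩

def fp : Equiv.Perm (Fin 6) :=
  ⟨fun i => ![3,4,5,0,1,2] i, fun i => ![3,4,5,0,1,2] i, by decide, by decide⟩

def perms : List (Equiv.Perm (Fin 6)) := [1, rp, rp * rp, fp, fp * rp, fp * rp * rp]

set_option maxRecDepth 10000 in
theorem perms_pres : ∀ σ ∈ perms, ∀ i j, n2 (σ i) (σ j) = n2 i j := by decide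

theorem perms_trans : ∀ i j : Fin 6, ∃ σ ∈ perms, σ i = j := by decide

theorem sqrt4 : Real.sqrt 4 = 2 := by
  rw [show (4:ℝ) = 2^2 by norm_num, Real.sqrt_sq (by norm_num : (0:ℝ) ≤ 2)]


/-- the vertex set of the prism `P̃(2)` is homogeneous, the distances
`d((0,0,0),(2,0,0))` and `d((0,0,0),(0,0,2))` both equal `2`, but no isometry of the
vertex set maps the pair `((0,0,0),(2,0,0))` to the pair `((0,0,0),(0,0,2))`. -/
theorem stmt_16 :
    (∀ p q : ↥triPrismVerts, ∃ e : ↥triPrismVerts ≃ᵢ ↥triPrismVerts, e p = q) ∧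
    dist (pt 0 0 0) (pt 2 0 0) = 2 ∧
    dist (pt 0 0 0) (pt 0 0 2) = 2 ∧
    ¬ ∃ e : ↥triPrismVerts ≃ᵢ ↥triPrismVerts,
        e ⟨pt 0 0 0, by simp [triPrismVerts]⟩ = ⟨pt 0 0 0, by simp [triPrismVerts]⟩ ∧
        e ⟨pt 2 0 0, by simp [triPrismVerts]⟩ = ⟨pt 0 0 2, by simp [triPrismVerts]⟩ := by
  refine ⟨?_, ?_, ?_, ?_⟩
  · intro p q
    obtain ⟨σ, hσmem, hσ⟩ := perms_trans (E.symm p) (E.symm q)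
    refine ⟨mkIso σ (perms_pres σ hσmem), ?_⟩
    show E (σ (E.symm p)) = q
    rw [hσ, E.apply_symm_apply]
  · have := dist_v 0 1
    rw [show v 0 = pt 0 0 0 from rfl, show v 1 = pt 2 0 0 from rfl,
      show n2 0 1 = 4 from rfl] at this
    rw [this]; push_cast; exact sqrt4
  · have := dist_v 0 3
    rw [show v 0 = pt 0 0 0 from rfl, show v 3 = pt 0 0 2 from rfl,
      show n2 0 3 = 4 from rfl] at this
    rw [this]; push_cast; exact sqrt4
  · rintro ⟨e, h1, h2⟩
    have h1' : e (E 0) = E 0 := h1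
    have h2' : e (E 1) = E 3 := h2
    obtain ⟨k, hk⟩ := v_surj (e (E 2))
    have d1 : dist (v k) (v 0) = dist (v 2) (v 0) := by
      rw [hk, ← E_apply 0, ← E_apply 2, ← Subtype.dist_eq, ← Subtype.dist_eq]
      conv_lhs => rw [← h1']
      exact e.dist_eq _ _
    have d2 : dist (v k) (v 3) = dist (v 2) (v 1) := by
      rw [hk, ← E_apply 3, ← E_apply 2, ← E_apply 1, ← Subtype.dist_eq, ← Subtype.dist_eq]
      conv_lhs => rw [← h2']
      exact e.dist_eq _ _
    have n1 := n2_eq_of_dist d1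
    have n1' := n2_eq_of_dist d2
    revert n1 n1'
    fin_cases k <;> decide
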